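/- Let μ be a non-atomic Borel probability measure on [0,2) and define φ(μ)(y) = μ[1,2) + Σ_{m∈ℤ} μ(m-y, m] for y ∈ ℝ (with the convention μ(a,b] := -μ[b,a) when b < a). Then φ(μ) is a continuous nondecreasing function ℝ → ℝ satisfying φ(μ)(y+1) = φ(μ)(y) + 1 for all y. -/

import Mathlib

open MeasureTheory

/-- Signed interval measure `μ(a,b]`, with the convention `μ(a,b] = -μ[b,a)` when `b < a`. -/
noncomputable def sIoc (μ : Measure ℝ) (a b : ℝ) : ℝ :=
  if a ≤ b then (μ (Set.Ioc a b)).toReal else -((μ (Set.Ico b a)).toReal)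

/-- The lift of the circle map associated to a measure `μ` on `[0,2)`:
`φ(μ)(y) = μ[1,2) + ∑_{m ∈ ℤ} μ(m-y, m]`. -/
noncomputable def phiMap (μ : Measure ℝ) : ℝ → ℝ :=
  fun y => (μ (Set.Ico (1:ℝ) 2)).toReal + ∑' m : ℤ, sIoc μ ((m : ℝ) - y) (m : ℝ)

/-- The CDF of `μ`. -/
noncomputable def Gcdf (μ : Measure ℝ) (t : ℝ) : ℝ := (μ (Set.Iic t)).toReal

section Aux

variable {μ : Measure ℝ} [IsProbabilityMeasure μ]

lemma Gcdf_mono : Monotone (Gcdf μ) := fun a b h =>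
  (ENNReal.toReal_le_toReal (measure_ne_top μ _) (measure_ne_top μ _)).mpr
    (measure_mono (Set.Iic_subset_Iic.2 h))

lemma Gcdf_of_nonpos (hsupp : μ (Set.Ico (0:ℝ) 2)ᶜ = 0) (hatom : ∀ y : ℝ, μ {y} = 0)
    {t : ℝ} (ht : t ≤ 0) : Gcdf μ t = 0 := by
  have h1 : μ (Set.Iio (0:ℝ)) = 0 := by
    refine measure_mono_null (fun x hx => ?_) hsupp
    simp only [Set.mem_Iio] at hx
    simp only [Set.mem_compl_iff, Set.mem_Ico, not_and, not_lt]
    intro h0; linarith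
  have h2 : μ (Set.Iic t) = 0 := by
    have hsub : Set.Iic t ⊆ Set.Iio (0:ℝ) ∪ {0} := by
      intro x hx
      rcases lt_or_eq_of_le (le_trans (Set.mem_Iic.1 hx) ht) with h | h
      · exact Or.inl h
      · exact Or.inr h
    refine measure_mono_null hsub (le_antisymm ?_ zero_le)
    calc μ (Set.Iio (0:ℝ) ∪ {0}) ≤ μ (Set.Iio (0:ℝ)) + μ {0} := measure_union_le _ _
      _ = 0 := by rw [h1, hatom]; simp
  simp [Gcdf, h2]

lemma Gcdf_of_two_le (hsupp : μ (Set.Ico (0:ℝ) 2)ᶜ = 0) {t : ℝ} (ht : 2 ≤ t) :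
    Gcdf μ t = 1 := by
  have h1 : μ (Set.Ioi t) = 0 := by
    refine measure_mono_null (fun x hx => ?_) hsupp
    simp only [Set.mem_Ioi] at hx
    simp only [Set.mem_compl_iff, Set.mem_Ico, not_and, not_lt]
    intro h0; linarith
  have h2 : μ (Set.Iic t) = 1 := by
    have h := measure_add_measure_compl (μ := μ) (measurableSet_Iic (a := t))
    rw [Set.compl_Iic, h1, add_zero, measure_univ] at h
    exact h
  simp [Gcdf, h2]

lemma Gcdf_sub_Ioc {a b : ℝ} (hab : a ≤ b) :
    (μ (Set.Ioc a b)).toReal = Gcdf μ b - Gcdf μ a := by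
  have hd : Disjoint (Set.Iic a) (Set.Ioc a b) := by
    rw [Set.disjoint_left]
    intro x hx hx'
    exact absurd hx'.1 (not_lt.2 hx)
  have hu := measure_union (μ := μ) hd measurableSet_Ioc
  rw [Set.Iic_union_Ioc_eq_Iic hab] at hu
  unfold Gcdf
  rw [hu, ENNReal.toReal_add (measure_ne_top μ _) (measure_ne_top μ _)]
  ring

lemma Gcdf_sub_Ico (hatom : ∀ y : ℝ, μ {y} = 0) {a b : ℝ} (hab : a ≤ b) :
    (μ (Set.Ico a b)).toReal = Gcdf μ b - Gcdf μ a := by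
  haveI : NullSingletonClass μ := ⟨hatom⟩
  rw [measure_congr Ico_ae_eq_Ioc]
  exact Gcdf_sub_Ioc hab

lemma sIoc_eq (hatom : ∀ y : ℝ, μ {y} = 0) (a b : ℝ) :
    sIoc μ a b = Gcdf μ b - Gcdf μ a := by
  unfold sIoc
  split_ifs with h
  · exact Gcdf_sub_Ioc h
  · rw [Gcdf_sub_Ico hatom (le_of_not_ge h)]; ring

lemma Gcdf_cont (hatom : ∀ y : ℝ, μ {y} = 0) : Continuous (Gcdf μ) := by
  rw [continuous_iff_continuousAt]
  intro x
  rw [Metric.continuousAt_iff]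
  intro ε hε
  have hI : (⋂ n : ℕ, Set.Icc (x - 1/(n+1)) (x + 1/(n+1))) = {x} := by
    ext z
    simp only [Set.mem_iInter, Set.mem_Icc, Set.mem_singleton_iff]
    constructor
    · intro h
      by_contra hne
      have hpos : 0 < |z - x| := abs_pos.2 (sub_ne_zero.2 hne)
      obtain ⟨n, hn⟩ := exists_nat_one_div_lt (K := ℝ) hpos
      have h1 := (h n).1
      have h2 := (h n).2
      rcases le_or_gt z x with hzx | hzx
      · have : |z - x| = x - z := by rw [abs_sub_comm]; exact abs_of_nonneg (by linarith)
        rw [this] at hn; linarith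
      · have : |z - x| = z - x := abs_of_nonneg (by linarith)
        rw [this] at hn; linarith
    · rintro rfl n
      have : (0:ℝ) < 1/(n+1) := by positivity
      constructor <;> linarith
  have htend : Filter.Tendsto (fun n : ℕ => μ (Set.Icc (x - 1/(n+1)) (x + 1/(n+1))))
      Filter.atTop (nhds 0) := by
    have h := tendsto_measure_iInter_atTop (μ := μ)
      (s := fun n : ℕ => Set.Icc (x - 1/(n+1)) (x + 1/(n+1)))
      (fun n => measurableSet_Icc.nullMeasurableSet)
      (fun a b hab => by
        apply Set.Icc_subset_Icc
        · have : (1:ℝ)/(b+1) ≤ 1/(a+1) := by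
            apply one_div_le_one_div_of_le (by positivity)
            have : (a:ℝ) ≤ b := by exact_mod_cast hab
            linarith
          linarith
        · have : (1:ℝ)/(b+1) ≤ 1/(a+1) := by
            apply one_div_le_one_div_of_le (by positivity)
            have : (a:ℝ) ≤ b := by exact_mod_cast hab
            linarith
          linarith)
      ⟨0, measure_ne_top μ _⟩
    rw [hI, hatom] at h
    exact h
  have hev : ∀ᶠ n : ℕ in Filter.atTop,
      μ (Set.Icc (x - 1/(n+1)) (x + 1/(n+1))) < ENNReal.ofReal ε := by
    apply htend.eventually_lt_const
    simp [hε]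
  obtain ⟨n, hn⟩ := hev.exists
  refine ⟨1/(n+1), by positivity, ?_⟩
  intro y hy
  rw [Real.dist_eq] at hy
  have key : ∀ a b : ℝ, x - 1/(n+1) ≤ a → a ≤ b → b ≤ x + 1/(n+1) →
      Gcdf μ b - Gcdf μ a < ε := by
    intro a b h1 h12 h2
    rw [← Gcdf_sub_Ioc h12]
    have hsub : Set.Ioc a b ⊆ Set.Icc (x - 1/(n+1)) (x + 1/(n+1)) := by
      intro z hz
      exact ⟨le_trans h1 (le_of_lt hz.1), le_trans hz.2 h2⟩
    have hle : μ (Set.Ioc a b) ≤ μ (Set.Icc (x - 1/(n+1)) (x + 1/(n+1))) := measure_mono hsub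
    have : μ (Set.Ioc a b) < ENNReal.ofReal ε := lt_of_le_of_lt hle hn
    exact (ENNReal.lt_ofReal_iff_toReal_lt (measure_ne_top μ _)).1 this
  rcases abs_lt.1 hy with ⟨hl, hr⟩
  rw [Real.dist_eq]
  rcases le_total x y with h | h
  · rw [abs_of_nonneg (sub_nonneg.2 (Gcdf_mono h))]
    exact key x y (by linarith) h (by linarith)
  · rw [abs_of_nonpos (sub_nonpos.2 (Gcdf_mono h))]
    have := key y x (by linarith) h (by linarith)
    linarith

lemma Gcdf_support (hsupp : μ (Set.Ico (0:ℝ) 2)ᶜ = 0) (hatom : ∀ y : ℝ, μ {y} = 0)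
    {y : ℝ} {N : ℤ} (h1 : -(N:ℝ) ≤ y) (h2 : y ≤ N) :
    ∀ m : ℤ, m ∉ Finset.Icc (-N + 1) (N + 1) → Gcdf μ m - Gcdf μ ((m:ℝ) - y) = 0 := by
  have hN : (0:ℝ) ≤ N := by linarith
  intro m hm
  rw [Finset.mem_Icc, not_and_or, not_le, not_le] at hm
  rcases hm with hm | hm
  · have hm' : (m:ℝ) ≤ -N := by
      have : m ≤ -N := by omega
      exact_mod_cast this
    rw [Gcdf_of_nonpos hsupp hatom (by linarith), Gcdf_of_nonpos hsupp hatom (by linarith)]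
    ring
  · have hm' : (N:ℝ) + 2 ≤ m := by
      have : N + 2 ≤ m := by omega
      exact_mod_cast this
    rw [Gcdf_of_two_le hsupp (by linarith), Gcdf_of_two_le hsupp (by linarith)]
    ring

lemma phiMap_eq (hsupp : μ (Set.Ico (0:ℝ) 2)ᶜ = 0) (hatom : ∀ y : ℝ, μ {y} = 0)
    {y : ℝ} {N : ℤ} (h1 : -(N:ℝ) ≤ y) (h2 : y ≤ N) :
    phiMap μ y = (1 - Gcdf μ 1) +
      ∑ m ∈ Finset.Icc (-N) (N + 2), (Gcdf μ m - Gcdf μ ((m:ℝ) - y)) := by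
  unfold phiMap
  have hIco : (μ (Set.Ico (1:ℝ) 2)).toReal = 1 - Gcdf μ 1 := by
    rw [Gcdf_sub_Ico hatom (by norm_num), Gcdf_of_two_le hsupp le_rfl]
  rw [hIco]
  congr 1
  rw [tsum_congr (fun m : ℤ => sIoc_eq hatom ((m:ℝ) - y) m)]
  refine tsum_eq_sum ?_
  intro m hm
  apply Gcdf_support hsupp hatom h1 h2
  rw [Finset.mem_Icc] at hm ⊢
  omega

end Aux

theorem phiMap_is_degree_one_lift (μ : Measure ℝ) [IsProbabilityMeasure μ]
    (hsupp : μ (Set.Ico (0:ℝ) 2)ᶜ = 0) (hatom : ∀ y : ℝ, μ {y} = 0) :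
    Continuous (phiMap μ) ∧ Monotone (phiMap μ) ∧
      ∀ y : ℝ, phiMap μ (y + 1) = phiMap μ y + 1 := by
  have hGc := Gcdf_cont (μ := μ) hatom
  refine ⟨?_, ?_, ?_⟩
  · rw [continuous_iff_continuousAt]
    intro x
    obtain ⟨N, hN⟩ : ∃ N : ℤ, |x| + 1 ≤ N :=
      ⟨⌈|x|⌉ + 1, by push_cast; linarith [Int.le_ceil |x|]⟩
    have hΦc : Continuous (fun y : ℝ => (1 - Gcdf μ 1) +
        ∑ m ∈ Finset.Icc (-N) (N + 2), (Gcdf μ m - Gcdf μ ((m:ℝ) - y))) := by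
      apply continuous_const.add
      apply continuous_finset_sum
      intro m _
      exact continuous_const.sub (hGc.comp (continuous_const.sub continuous_id))
    have hxmem : x ∈ Set.Ioo (-(N:ℝ)) N := by
      constructor
      · linarith [neg_abs_le x]
      · linarith [le_abs_self x]
    have hev : (fun y : ℝ => (1 - Gcdf μ 1) +
        ∑ m ∈ Finset.Icc (-N) (N + 2), (Gcdf μ m - Gcdf μ ((m:ℝ) - y)))
        =ᶠ[nhds x] phiMap μ := by
      filter_upwards [isOpen_Ioo.mem_nhds hxmem] with y hy
      exact (phiMap_eq hsupp hatom (le_of_lt hy.1) (le_of_lt hy.2)).symm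
    exact hΦc.continuousAt.congr hev
  · intro a b hab
    obtain ⟨N, hN⟩ : ∃ N : ℤ, |a| + |b| + 1 ≤ N :=
      ⟨⌈|a| + |b|⌉ + 1, by push_cast; linarith [Int.le_ceil (|a| + |b|)]⟩
    have h0a := abs_nonneg a
    have h0b := abs_nonneg b
    rw [phiMap_eq hsupp hatom (show -(N:ℝ) ≤ a by linarith [neg_abs_le a])
        (show a ≤ (N:ℝ) by linarith [le_abs_self a]),
      phiMap_eq hsupp hatom (show -(N:ℝ) ≤ b by linarith [neg_abs_le b])
        (show b ≤ (N:ℝ) by linarith [le_abs_self b])]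
    apply add_le_add le_rfl
    apply Finset.sum_le_sum
    intro m _
    have := Gcdf_mono (μ := μ) (show (m:ℝ) - b ≤ (m:ℝ) - a by linarith)
    linarith
  · intro y
    obtain ⟨N, hN⟩ : ∃ N : ℤ, |y| + 2 ≤ N :=
      ⟨⌈|y|⌉ + 2, by push_cast; linarith [Int.le_ceil |y|]⟩
    have h0y := abs_nonneg y
    have hy1 : -(N:ℝ) ≤ y := by linarith [neg_abs_le y]
    have hy2 : y ≤ (N:ℝ) := by linarith [le_abs_self y]
    have hy1' : -(N:ℝ) ≤ y + 1 := by linarith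
    have hy2' : y + 1 ≤ (N:ℝ) := by linarith [le_abs_self y]
    rw [phiMap_eq hsupp hatom hy1' hy2', phiMap_eq hsupp hatom hy1 hy2]
    have hN2 : (2:ℤ) ≤ N := by
      have : (2:ℝ) ≤ N := by linarith
      exact_mod_cast this
    have hsplit : ∀ m ∈ Finset.Icc (-N) (N + 2),
        Gcdf μ m - Gcdf μ ((m:ℝ) - (y + 1)) =
          (Gcdf μ m - Gcdf μ ((m:ℝ) - 1)) +
            (Gcdf μ ((m - 1 : ℤ) : ℝ) - Gcdf μ (((m - 1 : ℤ) : ℝ) - y)) := by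
      intro m _
      have harg1 : (m:ℝ) - (y + 1) = (((m - 1 : ℤ) : ℝ)) - y := by push_cast; ring
      have harg2 : ((m - 1 : ℤ) : ℝ) = (m:ℝ) - 1 := by push_cast; ring
      rw [harg1, harg2]
      ring
    rw [Finset.sum_congr rfl hsplit, Finset.sum_add_distrib]
    have hA : ∑ m ∈ Finset.Icc (-N) (N + 2), (Gcdf μ m - Gcdf μ ((m:ℝ) - 1)) = 1 := by
      rw [← Finset.sum_subset (show ({1, 2} : Finset ℤ) ⊆ Finset.Icc (-N) (N + 2) by
          intro m hm
          simp only [Finset.mem_insert, Finset.mem_singleton] at hm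
          rw [Finset.mem_Icc]
          rcases hm with rfl | rfl <;> omega)
        (fun m hmS hm12 => by
          simp only [Finset.mem_insert, Finset.mem_singleton] at hm12
          push_neg at hm12
          rw [Finset.mem_Icc] at hmS
          rcases lt_or_ge m 1 with h | h
          · have hm0 : (m:ℝ) ≤ 0 := by exact_mod_cast (show m ≤ 0 by omega)
            rw [Gcdf_of_nonpos hsupp hatom hm0,
              Gcdf_of_nonpos hsupp hatom (by linarith)]
            ring
          · have hm3 : (3:ℝ) ≤ m := by exact_mod_cast (show (3:ℤ) ≤ m by omega)
            rw [Gcdf_of_two_le hsupp (by linarith),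
              Gcdf_of_two_le hsupp (by linarith)]
            ring)]
      rw [Finset.sum_pair (by norm_num : (1:ℤ) ≠ 2)]
      norm_num
      rw [Gcdf_of_nonpos hsupp hatom le_rfl, Gcdf_of_two_le hsupp le_rfl]
      ring
    have hB : ∑ m ∈ Finset.Icc (-N) (N + 2),
        (Gcdf μ ((m - 1 : ℤ) : ℝ) - Gcdf μ (((m - 1 : ℤ) : ℝ) - y)) =
        ∑ m ∈ Finset.Icc (-N) (N + 2), (Gcdf μ m - Gcdf μ ((m:ℝ) - y)) := by
      have hsup : ∀ m : ℤ, m ∉ Finset.Icc (-N) (N + 2) →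
          Gcdf μ m - Gcdf μ ((m:ℝ) - y) = 0 := by
        intro m hm
        apply Gcdf_support hsupp hatom hy1 hy2
        rw [Finset.mem_Icc] at hm ⊢
        omega
      have hsup' : ∀ m : ℤ, m ∉ Finset.Icc (-N) (N + 2) →
          Gcdf μ ((m - 1 : ℤ) : ℝ) - Gcdf μ (((m - 1 : ℤ) : ℝ) - y) = 0 := by
        intro m hm
        apply Gcdf_support hsupp hatom hy1 hy2
        rw [Finset.mem_Icc] at hm ⊢
        omega
      rw [← tsum_eq_sum (L := SummationFilter.unconditional ℤ) hsup', ← tsum_eq_sum (L := SummationFilter.unconditional ℤ) hsup]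
      exact (Equiv.subRight (1:ℤ)).tsum_eq
        (fun m : ℤ => Gcdf μ (m:ℝ) - Gcdf μ ((m:ℝ) - y))
    rw [hA, hB]
    ring
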